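/- Fix μ ∈ ℝ, σ > 0, c ∈ ℝ, τ > 0 and q ∈ ℝ, and suppose μ > c. Then the map t ↦ F(t, τ, q; μ, σ, c) is strictly decreasing on (0, ∞): if 0 < t < t' then F(t, τ, q; μ, σ, c) > F(t', τ, q; μ, σ, c). -/

import Mathlib

open Real MeasureTheory Filter Topology

/-- Standard normal density φ(x) = exp(-x²/2)/√(2π). -/
noncomputable def stdPdf (x : ℝ) : ℝ := Real.exp (-(x ^ 2) / 2) / Real.sqrt (2 * Real.pi)

/-- Standard normal CDF Φ(x) = ∫_{-∞}^x φ(u) du. -/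
noncomputable def stdCdf (x : ℝ) : ℝ := ∫ u in Set.Iio x, stdPdf u

/-- Survival probability F(t, τ, q; μ, σ, c): the probability that the agent's
reputation does not hit the cost c before time t, given true quality q. -/
noncomputable def survF (t τ q μ σ c : ℝ) : ℝ :=
  stdCdf (Real.sqrt (t * τ) * (q - c) + (μ - c) / (σ ^ 2 * Real.sqrt (t * τ)))
    - Real.exp (-(2 / σ ^ 2) * (μ - c) * (q - c)) *
      stdCdf (Real.sqrt (t * τ) * (q - c) - (μ - c) / (σ ^ 2 * Real.sqrt (t * τ)))

lemma continuous_stdPdf : Continuous stdPdf := by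
  unfold stdPdf; fun_prop

lemma stdPdf_pos (x : ℝ) : 0 < stdPdf x :=
  div_pos (Real.exp_pos _) (Real.sqrt_pos.2 (by positivity))

lemma integrable_stdPdf : Integrable stdPdf := by
  have h : Integrable fun x : ℝ => Real.exp (-(1/2 : ℝ) * x ^ 2) :=
    integrable_exp_neg_mul_sq (by norm_num)
  have heq : stdPdf = fun x => Real.exp (-(1/2 : ℝ) * x ^ 2) / Real.sqrt (2 * Real.pi) := by
    funext x; unfold stdPdf; ring_nf
  rw [heq]; exact h.div_const _

lemma stdCdf_eq (y : ℝ) : stdCdf y = stdCdf 0 + ∫ u in (0:ℝ)..y, stdPdf u := by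
  have h : ∀ z : ℝ, stdCdf z = ∫ u in Set.Iic z, stdPdf u := fun z =>
    setIntegral_congr_set Iio_ae_eq_Iic
  rw [h, h, ← intervalIntegral.integral_Iic_sub_Iic integrable_stdPdf.integrableOn
    integrable_stdPdf.integrableOn]
  ring

lemma hasDerivAt_stdCdf (x : ℝ) : HasDerivAt stdCdf (stdPdf x) x := by
  have H : HasDerivAt (fun y => stdCdf 0 + ∫ u in (0:ℝ)..y, stdPdf u) (stdPdf x) x :=
    (intervalIntegral.integral_hasDerivAt_right (integrable_stdPdf.intervalIntegrable)
      (continuous_stdPdf.aestronglyMeasurable.stronglyMeasurableAtFilter)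
      continuous_stdPdf.continuousAt).const_add _
  have : stdCdf = fun y => stdCdf 0 + ∫ u in (0:ℝ)..y, stdPdf u := funext stdCdf_eq
  rw [this]; exact H

lemma g_strictAnti (a b K : ℝ) (hb : 0 < b) (hK : K = Real.exp (-2 * b * a)) :
    StrictAntiOn (fun s => stdCdf (s * a + b / s) - K * stdCdf (s * a - b / s)) (Set.Ioi 0) := by
  set g : ℝ → ℝ := fun s => stdCdf (s * a + b / s) - K * stdCdf (s * a - b / s) with hg
  have hderiv : ∀ s : ℝ, 0 < s →
      HasDerivAt g (stdPdf (s * a + b / s) * (-(2 * b) / s ^ 2)) s := by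
    intro s hs
    have hs0 : s ≠ 0 := ne_of_gt hs
    have h1 : HasDerivAt (fun s : ℝ => s * a + b / s) (a - b / s ^ 2) s := by
      have h := ((hasDerivAt_id s).mul_const a).add ((hasDerivAt_inv hs0).const_mul b)
      refine h.congr_deriv ?_
      field_simp
      ring
    have h2 : HasDerivAt (fun s : ℝ => s * a - b / s) (a + b / s ^ 2) s := by
      have h := ((hasDerivAt_id s).mul_const a).sub ((hasDerivAt_inv hs0).const_mul b)
      refine h.congr_deriv ?_
      field_simp
      ring
    have H1 := (hasDerivAt_stdCdf (s * a + b / s)).comp s h1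
    have H2 := ((hasDerivAt_stdCdf (s * a - b / s)).comp s h2).const_mul K
    have H := H1.sub H2
    have hkey : K * stdPdf (s * a - b / s) = stdPdf (s * a + b / s) := by
      unfold stdPdf
      rw [hK, mul_div_assoc', ← Real.exp_add]
      congr 1
      field_simp
      ring
    refine H.congr_deriv ?_
    rw [show K * (stdPdf (s * a - b / s) * (a + b / s ^ 2))
        = K * stdPdf (s * a - b / s) * (a + b / s ^ 2) by ring, hkey]
    ring
  apply strictAntiOn_of_deriv_neg (convex_Ioi 0)
  · intro s hs
    exact ((hderiv s hs).continuousAt).continuousWithinAt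
  · intro s hs
    rw [interior_Ioi] at hs
    have hs' : 0 < s := hs
    rw [(hderiv s hs').deriv]
    have hneg : (-(2 * b) / s ^ 2) < 0 :=
      div_neg_of_neg_of_pos (by linarith) (by positivity)
    exact mul_neg_of_pos_of_neg (stdPdf_pos _) hneg

/-- for μ > c, the survival probability is strictly decreasing in t on (0, ∞). -/
theorem stmt_13 (μ σ c τ q : ℝ) (hσ : 0 < σ) (hτ : 0 < τ) (hμ : μ > c)
    (t t' : ℝ) (ht : 0 < t) (htt' : t < t') :
    survF t τ q μ σ c > survF t' τ q μ σ c := by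
  set b : ℝ := (μ - c) / σ ^ 2 with hbdef
  have hb : 0 < b := div_pos (by linarith) (by positivity)
  have hK : Real.exp (-(2 / σ ^ 2) * (μ - c) * (q - c)) = Real.exp (-2 * b * (q - c)) := by
    congr 1; rw [hbdef]; ring
  have hanti := g_strictAnti (q - c) b _ hb rfl
  have hs : (0:ℝ) < Real.sqrt (t * τ) := Real.sqrt_pos.2 (mul_pos ht hτ)
  have hs' : (0:ℝ) < Real.sqrt (t' * τ) := Real.sqrt_pos.2 (mul_pos (by linarith) hτ)
  have hlt : Real.sqrt (t * τ) < Real.sqrt (t' * τ) :=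
    Real.sqrt_lt_sqrt (le_of_lt (mul_pos ht hτ)) (by nlinarith)
  have hmain := hanti hs hs' hlt
  have heq : ∀ u : ℝ, survF u τ q μ σ c
      = stdCdf (Real.sqrt (u * τ) * (q - c) + b / Real.sqrt (u * τ))
        - Real.exp (-2 * b * (q - c)) * stdCdf (Real.sqrt (u * τ) * (q - c) - b / Real.sqrt (u * τ)) := by
    intro u
    simp only [survF, hK, hbdef, div_div]
  rw [gt_iff_lt, heq t, heq t']
  exact hmain
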